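/- For all m ≥ 0, the Frobenius number G_e(m) of the set {e_m, e_{m+1}, e_{m+2}, …} of evil numbers ≥ e_m satisfies 4m ≤ G_e(m) ≤ 6m + 7. -/

import Mathlib

/-- The Thue–Morse sequence: parity of the binary digit sum of `n`. -/
def tm (n : ℕ) : ℕ := (Nat.digits 2 n).sum % 2

/-- The `n`-th evil number. -/
def evilSeq (n : ℕ) : ℕ := 2 * n + tm n

namespace FrobeniusEvil

lemma tm_le_one (n : ℕ) : tm n ≤ 1 :=
  Nat.lt_succ_iff.mp (Nat.mod_lt _ (by norm_num))

lemma tm_two_mul (n : ℕ) : tm (2 * n) = tm n := by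
  rcases Nat.eq_zero_or_pos n with rfl | h
  · simp
  · unfold tm
    rw [Nat.digits_def' (by norm_num : (1:ℕ) < 2) (by omega)]
    have h1 : (2 * n) % 2 = 0 := by omega
    have h2 : (2 * n) / 2 = n := by omega
    rw [h1, h2, List.sum_cons]
    omega

lemma tm_two_mul_add_one (n : ℕ) : tm (2 * n + 1) = (tm n + 1) % 2 := by
  unfold tm
  rw [Nat.digits_def' (by norm_num : (1:ℕ) < 2) (by omega)]
  have h1 : (2 * n + 1) % 2 = 1 := by omega
  have h2 : (2 * n + 1) / 2 = n := by omega
  rw [h1, h2, List.sum_cons]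
  omega

lemma tm_adj (n : ℕ) : tm (2 * n) ≠ tm (2 * n + 1) := by
  rw [tm_two_mul, tm_two_mul_add_one]
  have := tm_le_one n
  omega

/-- Among three consecutive integers, `tm` takes any prescribed value `b ≤ 1`. -/
lemma tm_three (c b : ℕ) (hb : b ≤ 1) : ∃ i, i ≤ 2 ∧ tm (c + i) = b := by
  by_cases h0 : tm c = b
  · exact ⟨0, by omega, by simpa using h0⟩
  by_cases h1 : tm (c + 1) = b
  · exact ⟨1, by omega, h1⟩
  have hc := tm_le_one c
  have hc1 := tm_le_one (c + 1)
  have hc2 := tm_le_one (c + 2)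
  rcases Nat.even_or_odd c with ⟨a, ha⟩ | ⟨a, ha⟩
  · exfalso
    have h2a : c = 2 * a := by omega
    have := tm_adj a
    rw [← h2a] at this
    omega
  · refine ⟨2, le_refl 2, ?_⟩
    have := tm_adj (a + 1)
    have e1 : 2 * (a + 1) = c + 1 := by omega
    have e2 : 2 * (a + 1) + 1 = c + 2 := by omega
    rw [e2, e1] at this
    omega

lemma evilSeq_strictMono : StrictMono evilSeq := by
  apply strictMono_nat_of_lt_succ
  intro n
  unfold evilSeq
  have := tm_le_one n
  have := tm_le_one (n + 1)
  omega

def Sset (m : ℕ) : Set ℕ := {x : ℕ | ∃ j, m ≤ j ∧ x = evilSeq j}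

lemma pair_mem (m i j : ℕ) (hi : m ≤ i) (hj : m ≤ j) :
    evilSeq i + evilSeq j ∈ AddSubmonoid.closure (Sset m) :=
  AddSubmonoid.add_mem _ (AddSubmonoid.subset_closure ⟨i, hi, rfl⟩)
    (AddSubmonoid.subset_closure ⟨j, hj, rfl⟩)

lemma single_mem (m i : ℕ) (hi : m ≤ i) :
    evilSeq i ∈ AddSubmonoid.closure (Sset m) :=
  AddSubmonoid.subset_closure ⟨i, hi, rfl⟩

/-- If `v`, `v+2`, `v+4` are representable and `k ≥ evilSeq m + v + 4` then `k` is
representable: one of `k-v-4`, `k-v-2`, `k-v` is an evil number `≥ evilSeq m`. -/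
lemma rep_AP {m k v : ℕ}
    (h0 : v ∈ AddSubmonoid.closure (Sset m))
    (h2 : v + 2 ∈ AddSubmonoid.closure (Sset m))
    (h4 : v + 4 ∈ AddSubmonoid.closure (Sset m))
    (hk : evilSeq m + v + 4 ≤ k) : k ∈ AddSubmonoid.closure (Sset m) := by
  set w := k - (v + 4) with hw
  have hwm : evilSeq m ≤ w := by omega
  obtain ⟨i, hi2, hib⟩ := tm_three (w / 2) (w % 2) (by omega)
  have hev : evilSeq (w / 2 + i) = w + 2 * i := by
    unfold evilSeq
    rw [hib]
    omega
  have hjm : m ≤ w / 2 + i := by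
    by_contra hcon
    push_neg at hcon
    have := evilSeq_strictMono hcon
    omega
  have hkey : k = (v + (4 - 2 * i)) + evilSeq (w / 2 + i) := by
    rw [hev]; omega
  rw [hkey]
  refine AddSubmonoid.add_mem _ ?_ (single_mem m _ hjm)
  interval_cases i
  · simpa using h4
  · simpa using h2
  · simpa using h0

/-- In the Thue–Morse sequence, `1,1` is always followed by `0`. -/
lemma tm_no_111 {n : ℕ} (h1 : tm (n + 1) = 1) (h2 : tm (n + 2) = 1) : tm (n + 3) = 0 := by
  have hc3 := tm_le_one (n + 3)
  rcases Nat.even_or_odd (n + 1) with ⟨a, ha⟩ | ⟨a, ha⟩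
  · exfalso
    have := tm_adj a
    have e1 : 2 * a = n + 1 := by omega
    have e2 : 2 * a + 1 = n + 2 := by omega
    rw [e2, e1] at this
    omega
  · have := tm_adj (a + 1)
    have e1 : 2 * (a + 1) = n + 2 := by omega
    have e2 : 2 * (a + 1) + 1 = n + 3 := by omega
    rw [e2, e1] at this
    omega

/-- Every `k ≥ 6m+8` is a sum of evil numbers with index at least `m`. -/
lemma rep_big {m k : ℕ} (hk : 6 * m + 8 ≤ k) : k ∈ AddSubmonoid.closure (Sset m) := by
  have t0 := tm_le_one m
  have t1 := tm_le_one (m + 1)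
  have t2 := tm_le_one (m + 2)
  have e0 : evilSeq m = 2 * m + tm m := rfl
  have e1 : evilSeq (m + 1) = 2 * m + 2 + tm (m + 1) := by unfold evilSeq; omega
  have e2 : evilSeq (m + 2) = 2 * m + 4 + tm (m + 2) := by unfold evilSeq; omega
  have htm : tm m = 0 ∨ tm m = 1 := by omega
  rcases htm with htm | htm
  · -- tm m = 0
    have htm1 : tm (m + 1) = 0 ∨ tm (m + 1) = 1 := by omega
    rcases htm1 with htm1 | htm1
    · -- pattern 0,0 : v = 4m via (m,m), (m,m+1), (m+1,m+1)
      refine rep_AP (v := 4 * m) ?_ ?_ ?_ (by omega)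
      · have h := pair_mem m m m le_rfl le_rfl
        have : evilSeq m + evilSeq m = 4 * m := by omega
        rwa [this] at h
      · have h := pair_mem m m (m + 1) le_rfl (by omega)
        have : evilSeq m + evilSeq (m + 1) = 4 * m + 2 := by omega
        rwa [this] at h
      · have h := pair_mem m (m + 1) (m + 1) (by omega) (by omega)
        have : evilSeq (m + 1) + evilSeq (m + 1) = 4 * m + 4 := by omega
        rwa [this] at h
    · have htm2 : tm (m + 2) = 0 ∨ tm (m + 2) = 1 := by omega
      rcases htm2 with htm2 | htm2
      · -- pattern 0,1,0 : v = 4m+4 via (m,m+2), (m+1,m+1), (m+2,m+2)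
        refine rep_AP (v := 4 * m + 4) ?_ ?_ ?_ (by omega)
        · have h := pair_mem m m (m + 2) le_rfl (by omega)
          have : evilSeq m + evilSeq (m + 2) = 4 * m + 4 := by omega
          rwa [this] at h
        · have h := pair_mem m (m + 1) (m + 1) (by omega) (by omega)
          have : evilSeq (m + 1) + evilSeq (m + 1) = 4 * m + 4 + 2 := by omega
          rwa [this] at h
        · have h := pair_mem m (m + 2) (m + 2) (by omega) (by omega)
          have : evilSeq (m + 2) + evilSeq (m + 2) = 4 * m + 4 + 4 := by omega
          rwa [this] at h
      · -- pattern 0,1,1 : tm (m+3) = 0, evilSeq (m+3) = 2m+6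
        have htm3 : tm (m + 3) = 0 := tm_no_111 htm1 htm2
        have e3 : evilSeq (m + 3) = 2 * m + 6 := by unfold evilSeq; omega
        rcases Nat.lt_or_ge k (6 * m + 10) with hks | hks
        · -- k = 6m+8 or 6m+9: explicit triples
          have hk89 : k = 6 * m + 8 ∨ k = 6 * m + 9 := by omega
          rcases hk89 with rfl | rfl
          · have h := AddSubmonoid.add_mem _ (pair_mem m m (m + 1) le_rfl (by omega))
              (single_mem m (m + 2) (by omega))
            have heq : evilSeq m + evilSeq (m + 1) + evilSeq (m + 2) = 6 * m + 8 := by omega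
            rwa [heq] at h
          · have h := AddSubmonoid.add_mem _ (pair_mem m m (m + 1) le_rfl (by omega))
              (single_mem m (m + 3) (by omega))
            have heq : evilSeq m + evilSeq (m + 1) + evilSeq (m + 3) = 6 * m + 9 := by omega
            rwa [heq] at h
        · -- k ≥ 6m+10 : v = 4m+6 via (m,m+3), (m+1,m+2), (m+2,m+2)
          refine rep_AP (v := 4 * m + 6) ?_ ?_ ?_ (by omega)
          · have h := pair_mem m m (m + 3) le_rfl (by omega)
            have : evilSeq m + evilSeq (m + 3) = 4 * m + 6 := by omega
            rwa [this] at h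
          · have h := pair_mem m (m + 1) (m + 2) (by omega) (by omega)
            have : evilSeq (m + 1) + evilSeq (m + 2) = 4 * m + 6 + 2 := by omega
            rwa [this] at h
          · have h := pair_mem m (m + 2) (m + 2) (by omega) (by omega)
            have : evilSeq (m + 2) + evilSeq (m + 2) = 4 * m + 6 + 4 := by omega
            rwa [this] at h
  · -- tm m = 1 : v = 4m+2
    refine rep_AP (v := 4 * m + 2) ?_ ?_ ?_ (by omega)
    · have h := pair_mem m m m le_rfl le_rfl
      have : evilSeq m + evilSeq m = 4 * m + 2 := by omega
      rwa [this] at h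
    · -- 4m+4
      have htm1 : tm (m + 1) = 0 ∨ tm (m + 1) = 1 := by omega
      rcases htm1 with htm1 | htm1
      · have h := pair_mem m (m + 1) (m + 1) (by omega) (by omega)
        have : evilSeq (m + 1) + evilSeq (m + 1) = 4 * m + 2 + 2 := by omega
        rwa [this] at h
      · have h := pair_mem m m (m + 1) le_rfl (by omega)
        have : evilSeq m + evilSeq (m + 1) = 4 * m + 2 + 2 := by omega
        rwa [this] at h
    · -- 4m+6
      have htm1 : tm (m + 1) = 0 ∨ tm (m + 1) = 1 := by omega
      rcases htm1 with htm1 | htm1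
      · have htm2 : tm (m + 2) = 0 ∨ tm (m + 2) = 1 := by omega
        rcases htm2 with htm2 | htm2
        · have h := pair_mem m (m + 1) (m + 2) (by omega) (by omega)
          have : evilSeq (m + 1) + evilSeq (m + 2) = 4 * m + 2 + 4 := by omega
          rwa [this] at h
        · have h := pair_mem m m (m + 2) le_rfl (by omega)
          have : evilSeq m + evilSeq (m + 2) = 4 * m + 2 + 4 := by omega
          rwa [this] at h
      · have h := pair_mem m (m + 1) (m + 1) (by omega) (by omega)
        have : evilSeq (m + 1) + evilSeq (m + 1) = 4 * m + 2 + 4 := by omega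
        rwa [this] at h

/-- The witness `4m + 1 - tm m` is not representable (for `m ≥ 1`). -/
lemma not_mem_w {m : ℕ} (hm : 1 ≤ m) :
    (4 * m + 1 - tm m) ∉ AddSubmonoid.closure (Sset m) := by
  intro hmem
  have t0 := tm_le_one m
  have key : ∀ x ∈ AddSubmonoid.closure (Sset m),
      x = 0 ∨ (∃ j, m ≤ j ∧ x = evilSeq j) ∨
        (4 * m ≤ x ∧ x ≠ 4 * m + 1 - tm m) := by
    intro x hx
    induction hx using AddSubmonoid.closure_induction with
    | mem x hx => exact Or.inr (Or.inl hx)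
    | zero => exact Or.inl rfl
    | add x y hx hy ihx ihy =>
      rcases ihx with rfl | hgx | hbx
      · simpa using ihy
      · rcases ihy with rfl | hgy | hby
        · simpa using Or.inr (Or.inl hgx)
        · -- both generators
          obtain ⟨i, hi, rfl⟩ := hgx
          obtain ⟨j, hj, rfl⟩ := hgy
          right; right
          have ti := tm_le_one i
          have tj := tm_le_one j
          constructor
          · unfold evilSeq; omega
          · intro hEq
            unfold evilSeq at hEq
            have hij : i = m ∧ j = m := by omega
            obtain ⟨rfl, rfl⟩ := hij
            omega
        · -- generator + large
          obtain ⟨i, hi, rfl⟩ := hgx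
          have ti := tm_le_one i
          right; right
          unfold evilSeq
          constructor <;> omega
      · rcases ihy with rfl | hgy | hby
        · simpa using Or.inr (Or.inr hbx)
        · obtain ⟨j, hj, rfl⟩ := hgy
          have tj := tm_le_one j
          right; right
          unfold evilSeq
          constructor <;> omega
        · right; right
          constructor <;> omega
  rcases key _ hmem with h0 | hg | hb
  · omega
  · obtain ⟨j, hj, hje⟩ := hg
    have tj := tm_le_one j
    unfold evilSeq at hje
    have hj2 : j = 2 * m := by omega
    subst hj2
    rw [tm_two_mul] at tj hje
    omega
  · omega

end FrobeniusEvil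

theorem frobenius_evil_bounds (m F : ℕ)
    (hF : FrobeniusNumber F {x : ℕ | ∃ j, m ≤ j ∧ x = evilSeq j}) :
    4 * m ≤ F ∧ F ≤ 6 * m + 7 := by
  obtain ⟨hF1, hF2⟩ := hF
  constructor
  · rcases Nat.eq_zero_or_pos m with rfl | hm
    · omega
    · have hnm := FrobeniusEvil.not_mem_w hm
      have hle : 4 * m + 1 - tm m ≤ F := hF2 hnm
      have := FrobeniusEvil.tm_le_one m
      omega
  · by_contra h
    push_neg at h
    exact hF1 (FrobeniusEvil.rep_big (m := m) (by omega))
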